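/- Let a > 0, E ∈ ℝ, κ ∈ ℤ + 1/2 with κ < 0, and set λ := -1/2 + κ - a and E = 1. Then Θ(τ) = -θ(τ) + π is an orbit of the system θ' = sin θ, Θ' = -2a sin θ cos θ cos Θ + 2aE sin²θ sin Θ - 2κ sin Θ + 2λ sin θ. -/

import Mathlib

/-- For `κ < 0` half-integer, `E = 1`, `λ = -1/2 + κ - a`, the curve `Θ = -θ + π`
is an orbit of the Θ-system. -/
theorem stmt1 (a E κ lam : ℝ) (ha : 0 < a) (hκhalf : ∃ n : ℤ, κ = (n : ℝ) + 1/2)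
    (hκneg : κ < 0) (hlam : lam = -1/2 + κ - a) (hE : E = 1)
    (θ : ℝ → ℝ) (hθ : ∀ τ, HasDerivAt θ (Real.sin (θ τ)) τ) :
    ∀ τ, HasDerivAt (fun τ => -θ τ + Real.pi)
      (-2*a*Real.sin (θ τ)*Real.cos (θ τ)*Real.cos (-θ τ + Real.pi)
        + 2*a*E*(Real.sin (θ τ))^2 * Real.sin (-θ τ + Real.pi)
        - 2*κ*Real.sin (-θ τ + Real.pi) + 2*lam*Real.sin (θ τ)) τ := by
  intro τ
  have h := ((hθ τ).neg).add_const Real.pi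
  convert h using 1
  case e'_4 => rfl
  case e'_5 => rfl
  case e'_8 => rfl
  have h1 : (-θ τ + Real.pi) = Real.pi - θ τ := by ring
  rw [h1, Real.sin_pi_sub, Real.cos_pi_sub, hlam, hE]
  have hpy := Real.sin_sq_add_cos_sq (θ τ)
  linear_combination 2*a*Real.sin (θ τ)*hpy
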